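/- (Classical discrete Hardy inequality, p = 2) For every sequence a : ℕ → ℝ of non-negative real numbers, ∑_{n=1}^∞ a(n)² ≥ (1/2)² · ∑_{n=1}^∞ ((a(1) + a(2) + ⋯ + a(n))/n)². -/

import Mathlib

open Finset

lemma hardy_key (a : ℕ → ℝ) (ha : ∀ n, 0 ≤ a n) (N : ℕ) :
    ∑ n ∈ range N, ((∑ i ∈ range (n + 1), a (i + 1)) / (n + 1 : ℝ)) ^ 2
      ≤ 2 * ∑ n ∈ range N,
          a (n + 1) * ((∑ i ∈ range (n + 1), a (i + 1)) / (n + 1 : ℝ)) := by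
  set b : ℕ → ℝ := fun n => (∑ i ∈ range (n + 1), a (i + 1)) / (n + 1 : ℝ) with hb
  have hstrong : ∀ N : ℕ, ∑ n ∈ range N, (b n ^ 2 - 2 * (a (n + 1) * b n))
      ≤ -((N : ℝ) * b (N - 1) ^ 2) := by
    intro N
    induction N with
    | zero => simp
    | succ M ih =>
      rw [Finset.sum_range_succ]
      have hAb : ∀ n : ℕ, (∑ i ∈ range (n + 1), a (i + 1)) = ((n : ℝ) + 1) * b n := by
        intro n
        simp only [hb]
        field_simp
      have step : b M ^ 2 - 2 * (a (M + 1) * b M)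
          ≤ (M : ℝ) * b (M - 1) ^ 2 - ((M : ℝ) + 1) * b M ^ 2 := by
        rcases Nat.eq_zero_or_pos M with h0 | hM
        · subst h0
          have : b 0 = a 1 := by simp [hb]
          rw [this]; push_cast; ring_nf; nlinarith [sq_nonneg (a 1)]
        · have hM1 : M - 1 + 1 = M := Nat.succ_pred_eq_of_pos hM
          have ha' : a (M + 1) = ((M : ℝ) + 1) * b M - (M : ℝ) * b (M - 1) := by
            have h1 := hAb M
            have h2 := hAb (M - 1)
            rw [hM1] at h2
            have : (∑ i ∈ range (M + 1), a (i + 1))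
                = (∑ i ∈ range M, a (i + 1)) + a (M + 1) := Finset.sum_range_succ _ _
            have hcast : ((M - 1 : ℕ) : ℝ) + 1 = (M : ℝ) := by
              rw [Nat.cast_sub hM]; push_cast; ring
            rw [h1, h2, hcast] at this
            linarith
          rw [ha']
          nlinarith [sq_nonneg (b M - b (M - 1)), (Nat.cast_nonneg M : (0:ℝ) ≤ M)]
      have : ((M + 1 : ℕ) : ℝ) = (M : ℝ) + 1 := by push_cast; ring
      rw [this]
      have : (M + 1 : ℕ) - 1 = M := rfl
      rw [this]
      linarith
  have := hstrong N
  have hnn : 0 ≤ (N : ℝ) * b (N - 1) ^ 2 := by positivity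
  have hsum : ∑ n ∈ range N, (b n ^ 2 - 2 * (a (n + 1) * b n))
      = ∑ n ∈ range N, b n ^ 2 - 2 * ∑ n ∈ range N, a (n + 1) * b n := by
    rw [Finset.sum_sub_distrib, Finset.mul_sum]
  linarith [hsum ▸ this]

lemma hardy_fin (a : ℕ → ℝ) (ha : ∀ n, 0 ≤ a n) (N : ℕ) :
    ∑ n ∈ range N, ((∑ i ∈ range (n + 1), a (i + 1)) / (n + 1 : ℝ)) ^ 2
      ≤ 4 * ∑ n ∈ range N, a (n + 1) ^ 2 := by
  set b : ℕ → ℝ := fun n => (∑ i ∈ range (n + 1), a (i + 1)) / (n + 1 : ℝ) with hb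
  have hbnn : ∀ n, 0 ≤ b n := by
    intro n
    apply div_nonneg (Finset.sum_nonneg fun i _ => ha _) (by positivity)
  have h1 : ∑ n ∈ range N, b n ^ 2 ≤ 2 * ∑ n ∈ range N, a (n + 1) * b n :=
    hardy_key a ha N
  have h2 : (∑ n ∈ range N, a (n + 1) * b n) ^ 2
      ≤ (∑ n ∈ range N, a (n + 1) ^ 2) * ∑ n ∈ range N, b n ^ 2 :=
    Finset.sum_mul_sq_le_sq_mul_sq _ _ _
  have hS : 0 ≤ ∑ n ∈ range N, b n ^ 2 := Finset.sum_nonneg fun n _ => sq_nonneg _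
  have hQ : 0 ≤ ∑ n ∈ range N, a (n + 1) ^ 2 := Finset.sum_nonneg fun n _ => sq_nonneg _
  have hT : 0 ≤ ∑ n ∈ range N, a (n + 1) * b n :=
    Finset.sum_nonneg fun n _ => mul_nonneg (ha _) (hbnn _)
  nlinarith [sq_nonneg (∑ n ∈ range N, b n ^ 2)]

/-- **Classical discrete Hardy inequality (p = 2).** For every sequence of non-negative reals,
`∑_{n=1}^∞ a(n)² ≥ (1/2)² · ∑_{n=1}^∞ ((a(1) + ⋯ + a(n))/n)²`, in `[0, ∞]`. -/
theorem classical_discrete_hardy_two (a : ℕ → ℝ) (ha : ∀ n, 0 ≤ a n) :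
    ∑' n : ℕ, ENNReal.ofReal (a (n + 1) ^ 2)
      ≥ (1 / 2) ^ 2 *
        ∑' n : ℕ, ENNReal.ofReal
          (((∑ i ∈ Finset.range (n + 1), a (i + 1)) / (n + 1 : ℝ)) ^ 2) := by
  set L := ∑' n : ℕ, ENNReal.ofReal (a (n + 1) ^ 2) with hL
  set R := ∑' n : ℕ, ENNReal.ofReal
      (((∑ i ∈ Finset.range (n + 1), a (i + 1)) / (n + 1 : ℝ)) ^ 2) with hR
  have hmain : R ≤ 4 * L := by
    rw [hR, ENNReal.tsum_eq_iSup_sum]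
    apply iSup_le
    intro s
    obtain ⟨N, hN⟩ := Finset.exists_nat_subset_range s
    calc ∑ n ∈ s, ENNReal.ofReal (((∑ i ∈ range (n + 1), a (i + 1)) / (n + 1 : ℝ)) ^ 2)
        ≤ ∑ n ∈ range N, ENNReal.ofReal
            (((∑ i ∈ range (n + 1), a (i + 1)) / (n + 1 : ℝ)) ^ 2) :=
          Finset.sum_le_sum_of_subset hN
      _ = ENNReal.ofReal (∑ n ∈ range N,
            ((∑ i ∈ range (n + 1), a (i + 1)) / (n + 1 : ℝ)) ^ 2) := by
          rw [ENNReal.ofReal_sum_of_nonneg fun n _ => sq_nonneg _]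
      _ ≤ ENNReal.ofReal (4 * ∑ n ∈ range N, a (n + 1) ^ 2) :=
          ENNReal.ofReal_le_ofReal (hardy_fin a ha N)
      _ = 4 * ENNReal.ofReal (∑ n ∈ range N, a (n + 1) ^ 2) := by
          rw [ENNReal.ofReal_mul (by norm_num)]
          norm_num
      _ = 4 * ∑ n ∈ range N, ENNReal.ofReal (a (n + 1) ^ 2) := by
          rw [ENNReal.ofReal_sum_of_nonneg fun n _ => sq_nonneg _]
      _ ≤ 4 * L := by
          gcongr
          exact ENNReal.sum_le_tsum _
  calc (1 / 2 : ENNReal) ^ 2 * R ≤ (1 / 2) ^ 2 * (4 * L) := by gcongr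
    _ = L := by
        rw [← mul_assoc]
        have : (2⁻¹ : ENNReal) ^ 2 * 4 = 1 := by
          rw [← ENNReal.ofReal_ofNat 4, ← ENNReal.ofReal_one,
            show ((2:ENNReal)⁻¹ = ENNReal.ofReal (1/2)) by
              rw [ENNReal.ofReal_div_of_pos] <;> norm_num,
            ← ENNReal.ofReal_pow (by norm_num), ← ENNReal.ofReal_mul (by positivity)]
          norm_num
        norm_num [this]
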